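/- Let d ≥ 1 and n ≥ 1 be integers and let φ: ℝ^n → ℝ^n be a linear isomorphism with φ(Z_d^n) = Z_d^n. Then there exist a permutation σ of {1, …, n} and signs ε_1, …, ε_n ∈ {+1, −1} such that φ(e_i) = ε_i e_{σ(i)} for all i. In particular, the group {φ ∈ GL_n(ℝ) : φ(Z_d^n) = Z_d^n} has order 2^n · n!. -/
import Mathlib

def Zset (d : ℕ) : Set ℝ :=
  {x | ∃ k : ℤ, x = (k : ℝ) ∧ k.natAbs ≤ d ∧ k % 2 = (d : ℤ) % 2}

def Zcube (d n : ℕ) : Set (Fin n → ℝ) :=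
  {x | ∀ i, x i ∈ Zset d}

lemma Zset.abs_le {d : ℕ} {x : ℝ} (hx : x ∈ Zset d) : |x| ≤ d := by
  obtain ⟨k, rfl, h1, h2⟩ := hx
  rw [← Int.cast_abs]
  have : |k| ≤ (d : ℤ) := by rw [Int.abs_eq_natAbs]; omega
  exact_mod_cast this

lemma Zset.neg_mem {d : ℕ} {x : ℝ} (hx : x ∈ Zset d) : -x ∈ Zset d := by
  obtain ⟨k, rfl, h1, h2⟩ := hx
  exact ⟨-k, by push_cast; ring, by omega, by omega⟩

lemma Zset.d_mem {d : ℕ} : ((d : ℝ)) ∈ Zset d := ⟨d, by push_cast; ring, by simp, rfl⟩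

lemma Zset.neg_d_mem {d : ℕ} : (-(d : ℝ)) ∈ Zset d := Zset.neg_mem Zset.d_mem

lemma Zset.add_two_mem {d : ℕ} {x : ℝ} (hx : x ∈ Zset d) (hxd : x ≠ d) :
    x + 2 ∈ Zset d := by
  obtain ⟨k, rfl, h1, h2⟩ := hx
  have hk : k ≠ (d : ℤ) := by rintro rfl; exact hxd rfl
  exact ⟨k + 2, by push_cast; ring, by omega, by omega⟩

lemma Zset.sub_two_mem {d : ℕ} {x : ℝ} (hx : x ∈ Zset d) (hxd : x ≠ -(d:ℝ)) :
    x - 2 ∈ Zset d := by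
  obtain ⟨k, rfl, h1, h2⟩ := hx
  have hk : k ≠ -(d : ℤ) := by
    rintro rfl; exact hxd (by push_cast; ring)
  exact ⟨k - 2, by push_cast; ring, by omega, by omega⟩

/-- Core convexity lemma: in a set bounded by `d` in each coordinate, any point of the
convex hull whose `i`-th coordinate has absolute value `d` agrees in that coordinate with
some member of the set; in fact a single member works for all such coordinates. -/
lemma core {d n : ℕ} {S : Set (Fin n → ℝ)} (hS : ∀ x ∈ S, ∀ i, |x i| ≤ (d : ℝ))
    {p : Fin n → ℝ} (hp : p ∈ convexHull ℝ S) :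
    ∃ x ∈ S, ∀ i, |p i| = d → x i = p i := by
  rw [convexHull_eq] at hp
  obtain ⟨ι, t, w, z, hw0, hw1, hz, hcm⟩ := hp
  have hcm' : ∑ j ∈ t, w j • z j = p := by
    rw [← hcm, Finset.centerMass, hw1]; simp
  obtain ⟨i0, hi0t, hi0⟩ : ∃ i0 ∈ t, w i0 ≠ 0 := by
    by_contra h
    push_neg at h
    have : ∑ j ∈ t, w j = 0 := Finset.sum_eq_zero h
    rw [hw1] at this; norm_num at this
  have hi0' : 0 < w i0 := lt_of_le_of_ne (hw0 i0 hi0t) (Ne.symm hi0)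
  refine ⟨z i0, hz _ hi0t, ?_⟩
  intro i hpi
  have hpi' : ∑ j ∈ t, w j * z j i = p i := by
    rw [← hcm']; simp [Finset.sum_apply]
  rcases abs_eq (by positivity : (0:ℝ) ≤ d) |>.mp hpi with h | h
  · have key : ∑ j ∈ t, w j * ((d : ℝ) - z j i) = 0 := by
      simp only [mul_sub, Finset.sum_sub_distrib, ← Finset.sum_mul, hw1, hpi', h]
      ring
    have h0 := (Finset.sum_eq_zero_iff_of_nonneg (fun j hj => by
      have := hS (z j) (hz j hj) i
      rw [abs_le] at this
      have := this.2
      nlinarith [hw0 j hj])).mp key i0 hi0t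
    have : z i0 i = d := by
      rcases mul_eq_zero.mp h0 with h' | h'
      · exact absurd h' hi0
      · linarith
    rw [this, h]
  · have key : ∑ j ∈ t, w j * (z j i + (d : ℝ)) = 0 := by
      simp only [mul_add, Finset.sum_add_distrib, ← Finset.sum_mul, hw1, hpi', h]
      ring
    have h0 := (Finset.sum_eq_zero_iff_of_nonneg (fun j hj => by
      have := hS (z j) (hz j hj) i
      rw [abs_le] at this
      have := this.1
      nlinarith [hw0 j hj])).mp key i0 hi0t
    have : z i0 i = -d := by
      rcases mul_eq_zero.mp h0 with h' | h'
      · exact absurd h' hi0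
      · linarith
    rw [this, h]

/-- The vertex set `{±d}^n`. -/
def Vset (d n : ℕ) : Set (Fin n → ℝ) := {x | ∀ i, x i = d ∨ x i = -(d : ℝ)}

lemma Vset.subset_Zcube {d n : ℕ} : Vset d n ⊆ Zcube d n := by
  intro x hx i
  rcases hx i with h | h <;> rw [h]
  · exact Zset.d_mem
  · exact Zset.neg_d_mem

lemma Vset.abs_eq {d n : ℕ} {x : Fin n → ℝ} (hx : x ∈ Vset d n) (i : Fin n) :
    |x i| = d := by
  rcases hx i with h | h <;> rw [h] <;> simp

lemma Zcube.bound {d n : ℕ} : ∀ x ∈ Zcube d n, ∀ i, |x i| ≤ (d : ℝ) :=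
  fun x hx i => Zset.abs_le (hx i)

/-- Vertices are extreme: not in the hull of the other lattice points. -/
lemma vertex_notMem_hull {d n : ℕ} {v : Fin n → ℝ} (hv : v ∈ Vset d n) :
    v ∉ convexHull ℝ (Zcube d n \ {v}) := by
  intro hmem
  obtain ⟨x, ⟨hxZ, hxv⟩, hx⟩ := core (fun x hx i => Zcube.bound x hx.1 i) hmem
  exact hxv (by funext i; exact hx i (Vset.abs_eq hv i))

/-- A non-vertex point of the cube is in the hull of the other lattice points. -/
lemma nonvertex_mem_hull {d n : ℕ} {x : Fin n → ℝ} (hx : x ∈ Zcube d n) (i : Fin n)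
    (h1 : x i ≠ d) (h2 : x i ≠ -(d : ℝ)) :
    x ∈ convexHull ℝ (Zcube d n \ {x}) := by
  set a := Function.update x i (x i + 2) with ha
  set b := Function.update x i (x i - 2) with hb
  have haZ : a ∈ Zcube d n := by
    intro j
    rcases eq_or_ne j i with rfl | hj
    · rw [ha, Function.update_self]; exact Zset.add_two_mem (hx j) h1
    · rw [ha, Function.update_of_ne hj]; exact hx j
  have hbZ : b ∈ Zcube d n := by
    intro j
    rcases eq_or_ne j i with rfl | hj
    · rw [hb, Function.update_self]; exact Zset.sub_two_mem (hx j) h2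
    · rw [hb, Function.update_of_ne hj]; exact hx j
  have hax : a ≠ x := by
    intro h
    have := congrFun h i
    rw [ha, Function.update_self] at this
    linarith
  have hbx : b ≠ x := by
    intro h
    have := congrFun h i
    rw [hb, Function.update_self] at this
    linarith
  have hxab : x = (1/2 : ℝ) • a + (1/2 : ℝ) • b := by
    funext j
    rcases eq_or_ne j i with rfl | hj
    · simp only [Pi.add_apply, Pi.smul_apply, ha, hb, Function.update_self, smul_eq_mul]
      ring
    · simp only [Pi.add_apply, Pi.smul_apply, ha, hb, Function.update_of_ne hj, smul_eq_mul]
      ring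
  have hamem : a ∈ Zcube d n \ {x} := ⟨haZ, by simpa using hax⟩
  have hbmem : b ∈ Zcube d n \ {x} := ⟨hbZ, by simpa using hbx⟩
  have hfin : (1/2 : ℝ) • a + (1/2 : ℝ) • b ∈ convexHull ℝ (Zcube d n \ {x}) := by
    refine (convex_convexHull ℝ (Zcube d n \ {x}))
      (subset_convexHull ℝ (Zcube d n \ {x}) hamem)
      (subset_convexHull ℝ (Zcube d n \ {x}) hbmem) ?_ ?_ ?_ <;> norm_num
  rwa [← hxab] at hfin

lemma symm_image {n : ℕ} {A : Set (Fin n → ℝ)} (φ : (Fin n → ℝ) ≃ₗ[ℝ] (Fin n → ℝ))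
    (hφ : φ '' A = A) : φ.symm '' A = A := by
  conv_lhs => rw [← hφ]
  rw [← Set.image_comp]
  simp [Function.comp]

lemma image_hull {n : ℕ} (φ : (Fin n → ℝ) ≃ₗ[ℝ] (Fin n → ℝ)) (S : Set (Fin n → ℝ)) :
    φ '' convexHull ℝ S = convexHull ℝ (φ '' S) := by
  exact (φ : (Fin n → ℝ) →ₗ[ℝ] (Fin n → ℝ)).image_convexHull S

/-- φ maps vertices to vertices. -/
lemma mapsV {d n : ℕ} (φ : (Fin n → ℝ) ≃ₗ[ℝ] (Fin n → ℝ))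
    (hφ : φ '' Zcube d n = Zcube d n) {v : Fin n → ℝ} (hv : v ∈ Vset d n) :
    φ v ∈ Vset d n := by
  have hφvZ : φ v ∈ Zcube d n := by
    rw [← hφ]; exact ⟨v, Vset.subset_Zcube hv, rfl⟩
  by_contra h
  obtain ⟨i, hi1, hi2⟩ : ∃ i, φ v i ≠ d ∧ φ v i ≠ -(d : ℝ) := by
    simp only [Vset, Set.mem_setOf_eq, not_forall] at h
    obtain ⟨i, hi⟩ := h
    exact ⟨i, not_or.mp hi⟩
  have hmem := nonvertex_mem_hull hφvZ i hi1 hi2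
  have himg : Zcube d n \ {φ v} = φ '' (Zcube d n \ {v}) := by
    rw [Set.image_diff φ.injective, hφ, Set.image_singleton]
  rw [himg, ← image_hull] at hmem
  obtain ⟨u, hu, huv⟩ := hmem
  rw [φ.injective huv] at hu
  exact vertex_notMem_hull hv hu

lemma Vset_image {d n : ℕ} (φ : (Fin n → ℝ) ≃ₗ[ℝ] (Fin n → ℝ))
    (hφ : φ '' Zcube d n = Zcube d n) : φ '' Vset d n = Vset d n := by
  apply Set.Subset.antisymm
  · rintro _ ⟨v, hv, rfl⟩
    exact mapsV φ hφ hv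
  · intro v hv
    refine ⟨φ.symm v, mapsV φ.symm (symm_image φ hφ) hv, by simp⟩

/-- v and w differ exactly in coordinate i. -/
def DiffOne {n : ℕ} (v w : Fin n → ℝ) (i : Fin n) : Prop :=
  v i ≠ w i ∧ ∀ j, j ≠ i → v j = w j

/-- The edge relation: the midpoint of v and w is not in the hull of the other vertices. -/
def Edge (d n : ℕ) (v w : Fin n → ℝ) : Prop :=
  (1/2 : ℝ) • (v + w) ∉ convexHull ℝ (Vset d n \ {v, w})

lemma edge_iff {d n : ℕ} (hd : 1 ≤ d) {v w : Fin n → ℝ} (hv : v ∈ Vset d n)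
    (hw : w ∈ Vset d n) (hvw : v ≠ w) :
    Edge d n v w ↔ ∃ i, DiffOne v w i := by
  constructor
  · -- if not DiffOne anywhere, midpoint is in the hull
    intro he
    by_contra hno
    push_neg at hno
    obtain ⟨i, hi⟩ : ∃ i, v i ≠ w i := by
      by_contra h
      push_neg at h
      exact hvw (funext h)
    obtain ⟨j, hji, hjne⟩ : ∃ j, j ≠ i ∧ v j ≠ w j := by
      have := hno i
      rw [DiffOne] at this
      push_neg at this
      obtain ⟨j, hj1, hj2⟩ := this hi
      exact ⟨j, hj1, hj2⟩
    set x := Function.update v i (w i) with hx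
    set y := Function.update w i (v i) with hy
    have hxV : x ∈ Vset d n := by
      intro k
      rcases eq_or_ne k i with rfl | hk
      · rw [hx, Function.update_self]; exact hw k
      · rw [hx, Function.update_of_ne hk]; exact hv k
    have hyV : y ∈ Vset d n := by
      intro k
      rcases eq_or_ne k i with rfl | hk
      · rw [hy, Function.update_self]; exact hv k
      · rw [hy, Function.update_of_ne hk]; exact hw k
    have hxne : x ∉ ({v, w} : Set (Fin n → ℝ)) := by
      intro h
      rcases h with h | h
      · apply hi
        have := congrFun h i
        rw [hx, Function.update_self] at this
        exact this.symm
      · have := congrFun h j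
        rw [hx, Function.update_of_ne hji] at this
        exact hjne this
    have hyne : y ∉ ({v, w} : Set (Fin n → ℝ)) := by
      intro h
      rcases h with h | h
      · have := congrFun h j
        rw [hy, Function.update_of_ne hji] at this
        exact hjne this.symm
      · exact hi (by have := congrFun h i; rwa [hy, Function.update_self] at this)
    have hmid : (1/2 : ℝ) • (v + w) = (1/2 : ℝ) • x + (1/2 : ℝ) • y := by
      funext k
      rcases eq_or_ne k i with rfl | hk
      · simp only [Pi.add_apply, Pi.smul_apply, hx, hy, Function.update_self, smul_eq_mul]
        ring
      · simp only [Pi.add_apply, Pi.smul_apply, hx, hy, Function.update_of_ne hk, smul_eq_mul]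
        ring
    apply he
    rw [hmid]
    exact (convex_convexHull ℝ (Vset d n \ {v, w}))
      (subset_convexHull ℝ _ ⟨hxV, hxne⟩)
      (subset_convexHull ℝ _ ⟨hyV, hyne⟩) (by norm_num) (by norm_num) (by norm_num)
  · rintro ⟨i, hi1, hi2⟩ hmem
    obtain ⟨x, ⟨hxV, hxvw⟩, hx⟩ := core (fun x hx k => by
      rw [Vset.abs_eq hx.1 k]) hmem
    -- x agrees with the midpoint at every coordinate j ≠ i
    have hagree : ∀ j, j ≠ i → x j = v j := by
      intro j hj
      have h1 : ((1/2 : ℝ) • (v + w)) j = v j := by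
        simp only [Pi.smul_apply, Pi.add_apply, smul_eq_mul, hi2 j hj]
        ring
      have h2 : |((1/2 : ℝ) • (v + w)) j| = d := by rw [h1]; exact Vset.abs_eq hv j
      rw [hx j h2, h1]
    -- x i = v i or x i = w i
    have hwi : w i = -(v i) := by
      rcases hv i with h1 | h1 <;> rcases hw i with h2 | h2
      · exact absurd (h1.trans h2.symm) hi1
      · rw [h2, h1]
      · rw [h2, h1]; ring
      · exact absurd (h1.trans h2.symm) hi1
    apply hxvw
    rcases hv i with h1 | h1 <;> rcases hxV i with h3 | h3
    · left; funext k
      rcases eq_or_ne k i with rfl | hk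
      · rw [h3, h1]
      · exact hagree k hk
    · right; funext k
      rcases eq_or_ne k i with rfl | hk
      · rw [h3, hwi, h1]
      · rw [hagree k hk, hi2 k hk]
    · right; funext k
      rcases eq_or_ne k i with rfl | hk
      · rw [h3, hwi, h1]; ring
      · rw [hagree k hk, hi2 k hk]
    · left; funext k
      rcases eq_or_ne k i with rfl | hk
      · rw [h3, h1]
      · exact hagree k hk

lemma edge_image {d n : ℕ} (φ : (Fin n → ℝ) ≃ₗ[ℝ] (Fin n → ℝ))
    (hφ : φ '' Zcube d n = Zcube d n) {v w : Fin n → ℝ} (hv : v ∈ Vset d n)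
    (hw : w ∈ Vset d n) (he : Edge d n v w) : Edge d n (φ v) (φ w) := by
  intro hmem
  apply he
  have himg : Vset d n \ {φ v, φ w} = φ '' (Vset d n \ {v, w}) := by
    rw [Set.image_diff φ.injective, Vset_image φ hφ]
    congr 1
    rw [Set.image_insert_eq, Set.image_singleton]
  rw [himg, ← image_hull] at hmem
  obtain ⟨u, hu, huv⟩ := hmem
  have : φ u = φ ((1/2 : ℝ) • (v + w)) := by
    rw [huv, map_smul, map_add]
  rw [φ.injective this] at hu
  exact hu

lemma key {d n : ℕ} (hd : 1 ≤ d) (φ : (Fin n → ℝ) ≃ₗ[ℝ] (Fin n → ℝ))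
    (hφ : φ '' Zcube d n = Zcube d n) (i : Fin n) :
    ∃ (j : Fin n) (c : ℝ), (c = 1 ∨ c = -1) ∧ φ (Pi.single i 1) = c • (Pi.single j 1 : Fin n → ℝ) := by
  have hd0 : (0 : ℝ) < d := by exact_mod_cast hd
  set v : Fin n → ℝ := fun _ => (d : ℝ) with hvdef
  set w := Function.update v i (-(d : ℝ)) with hwdef
  have hvV : v ∈ Vset d n := fun k => Or.inl rfl
  have hwV : w ∈ Vset d n := by
    intro k
    rcases eq_or_ne k i with rfl | hk
    · right; rw [hwdef, Function.update_self]
    · left; rw [hwdef, Function.update_of_ne hk]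
  have hvwi : v i ≠ w i := by
    rw [hwdef, Function.update_self]
    intro h
    have : v i = (d : ℝ) := rfl
    rw [this] at h
    linarith
  have hdiff : DiffOne v w i :=
    ⟨hvwi, fun j hj => by rw [hwdef, Function.update_of_ne hj]⟩
  have hvw : v ≠ w := fun h => hvwi (congrFun h i)
  have hedge : Edge d n v w := (edge_iff hd hvV hwV hvw).mpr ⟨i, hdiff⟩
  have hvV' := mapsV φ hφ hvV
  have hwV' := mapsV φ hφ hwV
  have hvw' : φ v ≠ φ w := fun h => hvw (φ.injective h)
  obtain ⟨j, hj⟩ := (edge_iff hd hvV' hwV' hvw').mp (edge_image φ hφ hvV hwV hedge)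
  have hsub : v - w = Pi.single i (2 * (d:ℝ)) := by
    funext k
    rcases eq_or_ne k i with rfl | hk
    · rw [Pi.sub_apply, hwdef, Function.update_self, Pi.single_eq_same]
      show (d : ℝ) - -(d : ℝ) = 2 * d
      ring
    · rw [Pi.sub_apply, hwdef, Function.update_of_ne hk, Pi.single_eq_of_ne hk, sub_self]
  have hsub' : φ v - φ w = Pi.single j (φ v j - φ w j) := by
    funext k
    rcases eq_or_ne k j with rfl | hk
    · rw [Pi.sub_apply, Pi.single_eq_same]
    · rw [Pi.sub_apply, Pi.single_eq_of_ne hk, hj.2 k hk, sub_self]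
  have hc' : φ v j - φ w j = 2 * d ∨ φ v j - φ w j = -(2 * d) := by
    rcases hvV' j with h1 | h1 <;> rcases hwV' j with h2 | h2
    · exact absurd (h1.trans h2.symm) hj.1
    · left; rw [h1, h2]; ring
    · right; rw [h1, h2]; ring
    · exact absurd (h1.trans h2.symm) hj.1
  have h2d : (2 * (d : ℝ)) ≠ 0 := by positivity
  refine ⟨j, (φ v j - φ w j) / (2 * d), ?_, ?_⟩
  · rcases hc' with h | h <;> rw [h]
    · left; field_simp
    · right; field_simp
  · have h1 : Pi.single i (1 : ℝ) = (1 / (2 * (d:ℝ))) • (v - w) := by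
      rw [hsub]
      funext k
      rcases eq_or_ne k i with rfl | hk
      · rw [Pi.smul_apply, Pi.single_eq_same, Pi.single_eq_same, smul_eq_mul]
        field_simp
      · rw [Pi.smul_apply, Pi.single_eq_of_ne hk, Pi.single_eq_of_ne hk, smul_eq_mul, mul_zero]
    rw [h1, map_smul, map_sub, hsub']
    funext k
    rcases eq_or_ne k j with rfl | hk
    · rw [Pi.smul_apply, Pi.smul_apply, Pi.single_eq_same, Pi.single_eq_same,
        smul_eq_mul, smul_eq_mul]
      field_simp
    · rw [Pi.smul_apply, Pi.smul_apply, Pi.single_eq_of_ne hk, Pi.single_eq_of_ne hk,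
        smul_eq_mul, smul_eq_mul, mul_zero, mul_zero]

lemma part1 {d n : ℕ} (hd : 1 ≤ d) (φ : (Fin n → ℝ) ≃ₗ[ℝ] (Fin n → ℝ))
    (hφ : φ '' Zcube d n = Zcube d n) :
    ∃ (σ : Equiv.Perm (Fin n)) (ε : Fin n → ℝ),
      (∀ i, ε i = 1 ∨ ε i = -1) ∧
      ∀ i, φ (Pi.single i 1) = ε i • (Pi.single (σ i) 1 : Fin n → ℝ) := by
  choose f c hc hfc using key hd φ hφ
  have hinj : Function.Injective f := by
    intro i k h
    by_contra hik
    have h1 := hfc i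
    have h2 := hfc k
    rw [h] at h1
    have h3 : φ (c k • (Pi.single i 1 : Fin n → ℝ)) = φ (c i • (Pi.single k 1 : Fin n → ℝ)) := by
      rw [map_smul, map_smul, h1, h2, smul_comm]
    have h4 := φ.injective h3
    have h5 := congrFun h4 i
    rw [Pi.smul_apply, Pi.smul_apply, Pi.single_eq_same,
      Pi.single_eq_of_ne hik, smul_eq_mul, smul_eq_mul, mul_one, mul_zero] at h5
    rcases hc k with h | h <;> rw [h] at h5 <;> norm_num at h5
  refine ⟨Equiv.ofBijective f (Finite.injective_iff_bijective.mp hinj), c, hc, fun i => ?_⟩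
  exact hfc i

noncomputable section

def sgn (b : Bool) : ℝ := if b then 1 else -1

lemma sgn_mul_self (b : Bool) : sgn b * sgn b = 1 := by cases b <;> norm_num [sgn]

lemma sgn_or (b : Bool) : sgn b = 1 ∨ sgn b = -1 := by cases b <;> simp [sgn]

lemma Zset.sgn_mul {d : ℕ} (b : Bool) {x : ℝ} (hx : x ∈ Zset d) : sgn b * x ∈ Zset d := by
  cases b
  · rw [show sgn false = -1 from rfl, neg_one_mul]; exact Zset.neg_mem hx
  · rw [show sgn true = 1 from rfl, one_mul]; exact hx

/-- The signed permutation linear equivalence. -/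
def sp {n : ℕ} (σ : Equiv.Perm (Fin n)) (s : Fin n → Bool) :
    (Fin n → ℝ) ≃ₗ[ℝ] (Fin n → ℝ) where
  toFun x := fun j => sgn (s (σ.symm j)) * x (σ.symm j)
  map_add' x y := by funext j; simp [mul_add]
  map_smul' c x := by funext j; simp only [Pi.smul_apply, smul_eq_mul, RingHom.id_apply]; ring
  invFun x := fun i => sgn (s i) * x (σ i)
  left_inv x := by
    funext i
    simp only [Equiv.symm_apply_apply]
    rw [← mul_assoc, sgn_mul_self, one_mul]
  right_inv x := by
    funext j
    simp only [Equiv.symm_apply_apply]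
    rw [← mul_assoc, sgn_mul_self, one_mul, Equiv.apply_symm_apply]

lemma sp_apply {n : ℕ} (σ : Equiv.Perm (Fin n)) (s : Fin n → Bool) (x : Fin n → ℝ)
    (j : Fin n) : sp σ s x j = sgn (s (σ.symm j)) * x (σ.symm j) := rfl

lemma sp_symm_apply {n : ℕ} (σ : Equiv.Perm (Fin n)) (s : Fin n → Bool) (x : Fin n → ℝ)
    (i : Fin n) : (sp σ s).symm x i = sgn (s i) * x (σ i) := rfl

lemma sp_single {n : ℕ} (σ : Equiv.Perm (Fin n)) (s : Fin n → Bool) (i : Fin n) :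
    sp σ s (Pi.single i 1) = sgn (s i) • (Pi.single (σ i) 1 : Fin n → ℝ) := by
  funext j
  rw [sp_apply, Pi.smul_apply, smul_eq_mul]
  rcases eq_or_ne j (σ i) with rfl | hj
  · rw [Equiv.symm_apply_apply, Pi.single_eq_same, Pi.single_eq_same]
  · have h1 : σ.symm j ≠ i := fun h => hj (by rw [← h, Equiv.apply_symm_apply])
    rw [Pi.single_eq_of_ne h1, Pi.single_eq_of_ne hj, mul_zero, mul_zero]

lemma sp_image {d n : ℕ} (σ : Equiv.Perm (Fin n)) (s : Fin n → Bool) :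
    sp σ s '' Zcube d n = Zcube d n := by
  apply Set.Subset.antisymm
  · rintro _ ⟨x, hx, rfl⟩ j
    rw [sp_apply]
    exact Zset.sgn_mul _ (hx _)
  · intro y hy
    refine ⟨(sp σ s).symm y, fun i => ?_, by simp⟩
    rw [sp_symm_apply]
    exact Zset.sgn_mul _ (hy _)

lemma single_eq_smul_single {n : ℕ} (i : Fin n) (x : ℝ) :
    (Pi.single i x : Fin n → ℝ) = x • (Pi.single i 1 : Fin n → ℝ) := by
  funext j
  rcases eq_or_ne j i with rfl | hj
  · rw [Pi.single_eq_same, Pi.smul_apply, Pi.single_eq_same, smul_eq_mul, mul_one]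
  · rw [Pi.single_eq_of_ne hj, Pi.smul_apply, Pi.single_eq_of_ne hj, smul_eq_mul, mul_zero]

lemma part2 {d n : ℕ} (hd : 1 ≤ d) :
    Nat.card {φ : (Fin n → ℝ) ≃ₗ[ℝ] (Fin n → ℝ) // φ '' Zcube d n = Zcube d n} =
      2 ^ n * n.factorial := by
  classical
  set G := {φ : (Fin n → ℝ) ≃ₗ[ℝ] (Fin n → ℝ) // φ '' Zcube d n = Zcube d n} with hG
  have hbij : Function.Bijective (fun p : Equiv.Perm (Fin n) × (Fin n → Bool) =>
      (⟨sp p.1 p.2, sp_image p.1 p.2⟩ : G)) := by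
    constructor
    · rintro ⟨σ, s⟩ ⟨σ', s'⟩ h
      rw [Subtype.mk_eq_mk] at h
      have hap : ∀ i, sgn (s i) • (Pi.single (σ i) 1 : Fin n → ℝ) =
          sgn (s' i) • (Pi.single (σ' i) 1 : Fin n → ℝ) := fun i => by
        rw [← sp_single, ← sp_single, h]
      have hσ : ∀ i, σ i = σ' i := by
        intro i
        by_contra hne
        have h5 := congrFun (hap i) (σ i)
        simp only [Pi.smul_apply, Pi.single_eq_same, Pi.single_eq_of_ne hne,
          smul_eq_mul, mul_one, mul_zero] at h5
        rcases sgn_or (s i) with hh | hh <;> rw [hh] at h5 <;> norm_num at h5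
      have hs : ∀ i, s i = s' i := by
        intro i
        have h5 := congrFun (hap i) (σ i)
        simp only [hσ i, Pi.smul_apply, Pi.single_eq_same, smul_eq_mul, mul_one] at h5
        cases hsi : s i <;> cases hsi' : s' i <;> rw [hsi, hsi'] at h5 <;>
          first
          | rfl
          | (exfalso; norm_num [sgn] at h5)
      have : σ = σ' := Equiv.ext hσ
      simp [Prod.ext_iff, this, funext hs]
    · rintro ⟨φ, hφ⟩
      obtain ⟨σ, ε, hε, hεeq⟩ := part1 hd φ hφ
      refine ⟨⟨σ, fun i => decide (ε i = 1)⟩, ?_⟩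
      apply Subtype.ext
      apply LinearEquiv.toLinearMap_injective
      apply LinearMap.pi_ext
      intro i x
      have hsgn : sgn (decide (ε i = 1)) = ε i := by
        rcases hε i with h | h
        · simp [h, sgn]
        · have hne1 : ε i ≠ 1 := by rw [h]; norm_num
          rw [decide_eq_false hne1, show sgn false = -1 from rfl, h]
      show sp σ _ (Pi.single i x) = φ (Pi.single i x)
      rw [single_eq_smul_single, map_smul, map_smul, sp_single, hεeq i, hsgn]
  rw [← Nat.card_eq_of_bijective _ hbij]
  simp only [Nat.card_eq_fintype_card, Fintype.card_prod, Fintype.card_perm, Fintype.card_fin,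
    Fintype.card_fun, Fintype.card_bool]
  ring

/-- A linear automorphism of `ℝ^n` preserving `Z_d^n` (for `d ≥ 1`) is a signed
permutation of the standard basis; the group of all such automorphisms has order
`2^n · n!`. -/
theorem stmt12 (d n : ℕ) (hd : 1 ≤ d) (hn : 1 ≤ n) :
    (∀ φ : (Fin n → ℝ) ≃ₗ[ℝ] (Fin n → ℝ), φ '' Zcube d n = Zcube d n →
      ∃ (σ : Equiv.Perm (Fin n)) (ε : Fin n → ℝ),
        (∀ i, ε i = 1 ∨ ε i = -1) ∧
        ∀ i, φ (Pi.single i 1) = ε i • (Pi.single (σ i) 1 : Fin n → ℝ)) ∧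
    Nat.card {φ : (Fin n → ℝ) ≃ₗ[ℝ] (Fin n → ℝ) // φ '' Zcube d n = Zcube d n} =
      2 ^ n * n.factorial := by
  exact ⟨fun φ hφ => part1 hd φ hφ, part2 hd⟩

end
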